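/- For every x ∈ ℝⁿ and r > 0, the measure ν = Φ_*(μ × ω) of the set of hyperplanes meeting the ball B(x,r) satisfies ν(π B(x,r)) ≤ μ(B(x,r)) + C ∫_{ℝⁿ \ B(x,r)} r/|x − y| dμ(y) for a dimensional constant C. -/

import Mathlib

open MeasureTheory Set

noncomputable section

/-- Euclidean space `ℝⁿ`. -/
abbrev Euc (n : ℕ) := EuclideanSpace ℝ (Fin n)

/-- The space of affine hyperplanes in `ℝⁿ`, encoded as pairs `(v, c)` with `‖v‖ = 1`,
representing the hyperplane `{x : ⟪x, v⟫ = c}`. -/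
abbrev Hyp (n : ℕ) := {p : Euc n × ℝ // ‖p.1‖ = 1}

/-- The hyperplane determined by `H`, as a subset of `ℝⁿ`. -/
def hset {n : ℕ} (H : Hyp n) : Set (Euc n) := {x | (inner ℝ x H.1.1 : ℝ) = H.1.2}

/-- `meets A = π A`: the set of hyperplanes intersecting `A`. -/
def meets {n : ℕ} (A : Set (Euc n)) : Set (Hyp n) := {H | (hset H ∩ A).Nonempty}

/-- The unit normal of `H` pointing out of the halfspace containing the basepoint `o`. -/
def nrm {n : ℕ} (o : Euc n) (H : Hyp n) : Euc n :=
  if (inner ℝ o H.1.1 : ℝ) < H.1.2 then H.1.1 else -H.1.1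

/-- `fnu ν o x = ∫_{π[o,x]} n(H) dν(H)`. -/
def fnu {n : ℕ} (ν : Measure (Hyp n)) (o : Euc n) (x : Euc n) : Euc n :=
  ∫ H in meets (segment ℝ o x), nrm o H ∂ν

/-- `sin α(v, H) = |⟪v, n(H)⟫| / |v|`, the sine of the angle between the line of `v`
and the hyperplane `H`. -/
def sinA {n : ℕ} (v : Euc n) (H : Hyp n) : ℝ := |(inner ℝ v H.1.1 : ℝ)| / ‖v‖

/-- The normalized volume measure on the unit sphere `S^{n-1}`. -/
def sphOmega (n : ℕ) : Measure (Metric.sphere (0 : Euc n) 1) :=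
  (((volume : Measure (Euc n)).toSphere) Set.univ)⁻¹ • ((volume : Measure (Euc n)).toSphere)

/-- `Φ(a, v)` is the hyperplane through `a` with unit normal `v`. -/
def PhiMap {n : ℕ} (p : Euc n × Metric.sphere (0 : Euc n) 1) : Hyp n :=
  ⟨((p.2 : Euc n), (inner ℝ p.1 (p.2 : Euc n) : ℝ)),
    mem_sphere_zero_iff_norm.mp p.2.2⟩

/-- The pushforward measure `ν = Φ_*(μ × ω)` on the space of hyperplanes. -/
def nuPush {n : ℕ} (μ : Measure (Euc n)) : Measure (Hyp n) :=
  Measure.map PhiMap (μ.prod (sphOmega n))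

namespace Stmt17Aux

open Metric ENNReal
open scoped Pointwise

variable {n : ℕ}

lemma abs_apply_le_norm (y : EuclideanSpace ℝ (Fin n)) (i : Fin n) : |y i| ≤ ‖y‖ := by
  have h1 : |y i| = Real.sqrt (|y i| ^ 2) := by
    rw [Real.sqrt_sq_eq_abs, abs_abs]
  rw [EuclideanSpace.norm_eq, h1]
  apply Real.sqrt_le_sqrt
  have := Finset.single_le_sum (f := fun j => ‖y j‖ ^ 2) (fun j _ => by positivity)
    (Finset.mem_univ i)
  simpa [Real.norm_eq_abs] using this

lemma vol_slab (hn : 1 ≤ n) (e : Euc n) (he : ‖e‖ = 1) (δ : ℝ) :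
    volume {x : Euc n | |(inner ℝ e x : ℝ)| < δ ∧ ‖x‖ < 1} ≤ 2 ^ n * ENNReal.ofReal δ := by
  classical
  have i0 : Fin n := ⟨0, hn⟩
  have card : Module.finrank ℝ (Euc n) = Fintype.card (Fin n) := by
    simp [finrank_euclideanSpace_fin]
  have horth : Orthonormal ℝ (Set.restrict ({i0} : Set (Fin n)) (fun _ => e)) := by
    constructor
    · intro i; exact he
    · intro i j hij
      exact absurd (Subtype.ext (i.2.trans j.2.symm)) hij
  obtain ⟨b, hb⟩ := horth.exists_orthonormalBasis_extension_of_card_eq card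
  have he0 : b i0 = e := hb i0 rfl
  set S₁ : Set (EuclideanSpace ℝ (Fin n)) := {y | |y i0| < δ ∧ ‖y‖ < 1} with hS₁
  have hcont : Continuous fun y : EuclideanSpace ℝ (Fin n) => y i0 :=
    (EuclideanSpace.proj (𝕜 := ℝ) i0).continuous
  have hS₁meas : MeasurableSet S₁ := by
    have : S₁ = (fun y : EuclideanSpace ℝ (Fin n) => |y i0|) ⁻¹' Iio δ ∩ Metric.ball 0 1 := by
      ext y; simp [hS₁, mem_ball_zero_iff]
    rw [this]
    exact (hcont.abs.measurable measurableSet_Iio).inter measurableSet_ball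
  have hpre : {x : Euc n | |(inner ℝ e x : ℝ)| < δ ∧ ‖x‖ < 1} = b.repr ⁻¹' S₁ := by
    ext x
    simp only [Set.mem_setOf_eq, Set.mem_preimage, hS₁]
    rw [b.repr_apply_apply, he0, b.repr.norm_map]
  rw [hpre, b.measurePreserving_repr.measure_preimage hS₁meas.nullMeasurableSet]
  set Q : Set (Fin n → ℝ) := Set.univ.pi fun i => if i = i0 then Ioo (-δ) δ else Ioo (-1) 1
    with hQ
  have hsub : S₁ ⊆ (MeasurableEquiv.toLp 2 (Fin n → ℝ)).symm ⁻¹' Q := by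
    intro y hy
    intro i _
    have heq : ((MeasurableEquiv.toLp 2 (Fin n → ℝ)).symm y) i = y i := rfl
    by_cases hi : i = i0
    · simp only [hQ, hi, if_pos rfl, heq]
      subst hi
      exact abs_lt.mp hy.1
    · simp only [hQ, if_neg hi, heq]
      have := (abs_apply_le_norm y i).trans_lt hy.2
      exact abs_lt.mp this
  have hQmeas : MeasurableSet Q :=
    MeasurableSet.univ_pi fun i => by split <;> exact measurableSet_Ioo
  calc volume S₁ ≤ volume ((MeasurableEquiv.toLp 2 (Fin n → ℝ)).symm ⁻¹' Q) :=
        measure_mono hsub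
    _ = volume Q :=
        (EuclideanSpace.volume_preserving_symm_measurableEquiv_toLp (Fin n)).measure_preimage
          hQmeas.nullMeasurableSet
    _ = ∏ i : Fin n, volume (if i = i0 then Ioo (-δ) δ else Ioo (-1) 1) := volume_pi_pi _
    _ = ∏ i : Fin n, (if i = i0 then ENNReal.ofReal (δ - -δ) else 2) := by
        apply Finset.prod_congr rfl
        intro i _
        split <;> simp [Real.volume_Ioo] <;> norm_num
    _ ≤ 2 ^ n * ENNReal.ofReal δ := by
        rw [← Finset.mul_prod_erase Finset.univ _ (Finset.mem_univ i0)]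
        have h1 : ∏ i ∈ Finset.univ.erase i0,
            (if i = i0 then ENNReal.ofReal (δ - -δ) else (2:ℝ≥0∞)) = 2 ^ (n - 1) := by
          rw [Finset.prod_congr rfl fun i hi => if_neg (Finset.mem_erase.mp hi).1,
            Finset.prod_const, Finset.card_erase_of_mem (Finset.mem_univ i0),
            Finset.card_univ, Fintype.card_fin]
        rw [if_pos rfl, h1]
        have h2 : ENNReal.ofReal (δ - -δ) = 2 * ENNReal.ofReal δ := by
          rw [show δ - -δ = 2 * δ by ring, ENNReal.ofReal_mul (by norm_num)]
          norm_num
        rw [h2]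
        rw [show (2:ℝ≥0∞) * ENNReal.ofReal δ * 2 ^ (n-1) = (2 * 2^(n-1)) * ENNReal.ofReal δ
          by ring]
        rw [← pow_succ', Nat.sub_add_cancel hn]

lemma omega_slab (hn : 2 ≤ n) (e : Euc n) (he : ‖e‖ = 1) (δ : ℝ) :
    sphOmega n {v : Metric.sphere (0 : Euc n) 1 | |(inner ℝ e (v : Euc n) : ℝ)| < δ} ≤
      (((volume : Measure (Euc n)).toSphere) Set.univ)⁻¹ * (n * 2 ^ n) * ENNReal.ofReal δ := by
  set A : Set (Metric.sphere (0 : Euc n) 1) :=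
    {v : Metric.sphere (0 : Euc n) 1 | |(inner ℝ e (v : Euc n) : ℝ)| < δ} with hA
  have hAcont : Continuous fun v : Metric.sphere (0 : Euc n) 1 => |(inner ℝ e (v : Euc n) : ℝ)| :=
    (Continuous.inner continuous_const continuous_subtype_val).abs
  have hAmeas : MeasurableSet A := hAcont.measurable measurableSet_Iio
  have hsub : Ioo (0:ℝ) 1 • ((↑) '' A : Set (Euc n)) ⊆
      {x : Euc n | |(inner ℝ e x : ℝ)| < δ ∧ ‖x‖ < 1} := by
    intro x hx
    rw [Set.mem_smul] at hx
    obtain ⟨c, hc, y, hy, rfl⟩ := hx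
    obtain ⟨v, hvA, rfl⟩ := hy
    have hv1 : ‖(v : Euc n)‖ = 1 := mem_sphere_zero_iff_norm.mp v.2
    constructor
    · have : (inner ℝ e (c • (v:Euc n)) : ℝ) = c * inner ℝ e (v:Euc n) := real_inner_smul_right _ _ _
      rw [this, abs_mul, abs_of_pos hc.1]
      calc c * |(inner ℝ e (v:Euc n) : ℝ)| ≤ |(inner ℝ e (v:Euc n) : ℝ)| :=
            mul_le_of_le_one_left (abs_nonneg _) hc.2.le
        _ < δ := hvA
    · rw [norm_smul, hv1, mul_one, Real.norm_eq_abs, abs_of_pos hc.1]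
      exact hc.2
  have h1 : (volume : Measure (Euc n)).toSphere A =
      n * volume (Ioo (0:ℝ) 1 • ((↑) '' A : Set (Euc n))) := by
    rw [Measure.toSphere_apply' _ hAmeas, finrank_euclideanSpace_fin]
  have h2 : (volume : Measure (Euc n)).toSphere A ≤ n * (2 ^ n * ENNReal.ofReal δ) := by
    rw [h1]
    exact mul_le_mul_right ((measure_mono hsub).trans (vol_slab (by omega) e he δ)) _
  calc sphOmega n A = (((volume : Measure (Euc n)).toSphere) Set.univ)⁻¹ *
        (volume : Measure (Euc n)).toSphere A := by
        rw [sphOmega, Measure.smul_apply, smul_eq_mul]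
    _ ≤ (((volume : Measure (Euc n)).toSphere) Set.univ)⁻¹ * (n * (2 ^ n * ENNReal.ofReal δ)) :=
        mul_le_mul_right h2 _
    _ = (((volume : Measure (Euc n)).toSphere) Set.univ)⁻¹ * (n * 2 ^ n) * ENNReal.ofReal δ := by
        ring

lemma omega_slab' (hn : 2 ≤ n) (u : Euc n) (hu : u ≠ 0) (t : ℝ) :
    sphOmega n {v : Metric.sphere (0 : Euc n) 1 | |(inner ℝ u (v : Euc n) : ℝ)| < t} ≤
      (((volume : Measure (Euc n)).toSphere) Set.univ)⁻¹ * (n * 2 ^ n) *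
        ENNReal.ofReal (t / ‖u‖) := by
  have hupos : (0:ℝ) < ‖u‖ := norm_pos_iff.mpr hu
  set e : Euc n := ‖u‖⁻¹ • u with hedef
  have he : ‖e‖ = 1 := norm_smul_inv_norm hu
  have hset : {v : Metric.sphere (0 : Euc n) 1 | |(inner ℝ u (v : Euc n) : ℝ)| < t} =
      {v : Metric.sphere (0 : Euc n) 1 | |(inner ℝ e (v : Euc n) : ℝ)| < t / ‖u‖} := by
    ext v
    simp only [Set.mem_setOf_eq, hedef]
    rw [real_inner_smul_left, abs_mul, abs_of_pos (inv_pos.mpr hupos),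
      div_eq_inv_mul, mul_lt_mul_iff_right₀ (inv_pos.mpr hupos)]
  rw [hset]
  exact omega_slab hn e he _

lemma meets_ball_eq (x : Euc n) (r : ℝ) :
    meets (Metric.ball x r) = {H : Hyp n | |(inner ℝ x H.1.1 : ℝ) - H.1.2| < r} := by
  ext H
  constructor
  · rintro ⟨z, hz1, hz2⟩
    have hz1' : (inner ℝ z H.1.1 : ℝ) = H.1.2 := hz1
    have hz2' : dist z x < r := mem_ball.mp hz2
    show |(inner ℝ x H.1.1 : ℝ) - H.1.2| < r
    calc |(inner ℝ x H.1.1 : ℝ) - H.1.2| = |(inner ℝ (x - z) H.1.1 : ℝ)| := by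
          rw [inner_sub_left, hz1']
      _ ≤ ‖x - z‖ * ‖H.1.1‖ := abs_real_inner_le_norm _ _
      _ = dist z x := by rw [H.2, mul_one, ← dist_eq_norm, dist_comm]
      _ < r := hz2'
  · intro h
    refine ⟨x - ((inner ℝ x H.1.1 : ℝ) - H.1.2) • H.1.1, ?_, ?_⟩
    · show (inner ℝ (x - ((inner ℝ x H.1.1 : ℝ) - H.1.2) • H.1.1) H.1.1 : ℝ) = H.1.2
      rw [inner_sub_left, real_inner_smul_left, real_inner_self_eq_norm_mul_norm, H.2]
      ring
    · rw [mem_ball, dist_eq_norm, sub_sub_cancel_left, norm_neg, norm_smul, H.2, mul_one,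
        Real.norm_eq_abs]
      exact h

lemma phimap_cont : Continuous (PhiMap (n := n)) := by
  apply Continuous.subtype_mk
  exact (continuous_subtype_val.comp continuous_snd).prodMk
    (Continuous.inner continuous_fst (continuous_subtype_val.comp continuous_snd))

end Stmt17Aux

open Stmt17Aux Metric
open scoped ENNReal

/-- for a dimensional constant `C`, for every Radon measure `μ`, point `x` and
radius `r > 0`, `ν(π B(x,r)) ≤ μ(B(x,r)) + C ∫_{ℝⁿ \ B(x,r)} r/|x−y| dμ(y)` where
`ν = Φ_*(μ × ω)`. -/
theorem stmt17 (n : ℕ) (hn : 2 ≤ n) :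
    ∃ C : NNReal, ∀ (μ : Measure (Euc n)), IsFiniteMeasureOnCompacts μ →
      ∀ (x : Euc n) (r : ℝ), 0 < r →
        nuPush μ (meets (Metric.ball x r)) ≤
          μ (Metric.ball x r) +
            C * ∫⁻ y in (Metric.ball x r)ᶜ, ENNReal.ofReal (r / ‖x - y‖) ∂μ := by
  classical
  haveI : BorelSpace (Hyp n) := Subtype.borelSpace {p : Euc n × ℝ | ‖p.1‖ = 1}
  set T := ((volume : Measure (Euc n)).toSphere) Set.univ with hT
  have hTpos : T ≠ 0 := by
    rw [hT, Measure.toSphere_apply_univ, finrank_euclideanSpace_fin]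
    have h1 : (volume : Measure (Euc n)) (Metric.ball 0 1) ≠ 0 :=
      (measure_ball_pos _ _ one_pos).ne'
    have h2 : (n : ℝ≥0∞) ≠ 0 := by
      simp only [ne_eq, Nat.cast_eq_zero]; omega
    exact mul_ne_zero h2 h1
  have hTfin : T ≠ ⊤ := measure_ne_top _ _
  set Cb : ℝ≥0∞ := T⁻¹ * (n * 2 ^ n) with hCb
  have hCbfin : Cb ≠ ⊤ := by
    apply ENNReal.mul_ne_top (ENNReal.inv_ne_top.mpr hTpos)
    exact ENNReal.mul_ne_top (ENNReal.natCast_ne_top n)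
      (ENNReal.pow_ne_top ENNReal.ofNat_ne_top)
  refine ⟨Cb.toNNReal, ?_⟩
  intro μ hμ x r hr
  have hCbcoe : (Cb.toNNReal : ℝ≥0∞) = Cb := ENNReal.coe_toNNReal hCbfin
  have homega_univ : sphOmega n Set.univ = 1 := by
    rw [sphOmega, Measure.smul_apply, smul_eq_mul]
    exact ENNReal.inv_mul_cancel hTpos hTfin
  haveI : IsFiniteMeasure (sphOmega n) :=
    ⟨by rw [homega_univ]; exact ENNReal.one_lt_top⟩
  have hmeets : MeasurableSet (meets (Metric.ball x r)) := by
    rw [meets_ball_eq]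
    have hcont : Continuous fun H : Hyp n => |(inner ℝ x H.1.1 : ℝ) - H.1.2| := by
      apply Continuous.abs
      apply Continuous.sub
      · exact Continuous.inner continuous_const
          ((continuous_fst.comp continuous_subtype_val))
      · exact continuous_snd.comp continuous_subtype_val
    exact hcont.measurable measurableSet_Iio
  have hScont : Continuous fun p : Euc n × Metric.sphere (0 : Euc n) 1 =>
      |(inner ℝ (x - p.1) ((p.2 : Euc n)) : ℝ)| :=
    (Continuous.inner (continuous_const.sub continuous_fst)
      (continuous_subtype_val.comp continuous_snd)).abs
  have hmeasS : MeasurableSet {p : Euc n × Metric.sphere (0 : Euc n) 1 |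
      |(inner ℝ (x - p.1) ((p.2 : Euc n)) : ℝ)| < r} := hScont.measurable measurableSet_Iio
  have hpre : PhiMap ⁻¹' meets (Metric.ball x r) =
      {p : Euc n × Metric.sphere (0 : Euc n) 1 |
        |(inner ℝ (x - p.1) ((p.2 : Euc n)) : ℝ)| < r} := by
    rw [meets_ball_eq]
    ext p
    simp only [Set.mem_preimage, Set.mem_setOf_eq, PhiMap, inner_sub_left]
  rw [nuPush, Measure.map_apply phimap_cont.measurable hmeets, hpre,
    Measure.prod_apply hmeasS]
  have hfib : ∀ y : Euc n, (Prod.mk y ⁻¹' {p : Euc n × Metric.sphere (0 : Euc n) 1 |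
      |(inner ℝ (x - p.1) ((p.2 : Euc n)) : ℝ)| < r}) =
      {v : Metric.sphere (0 : Euc n) 1 | |(inner ℝ (x - y) ((v : Euc n)) : ℝ)| < r} :=
    fun y => rfl
  simp only [hfib]
  rw [← lintegral_add_compl
    (fun y : Euc n => sphOmega n {v : Metric.sphere (0 : Euc n) 1 |
      |(inner ℝ (x - y) ((v : Euc n)) : ℝ)| < r}) (measurableSet_ball (x := x) (ε := r))]
  apply add_le_add
  · calc ∫⁻ y in Metric.ball x r, sphOmega n {v : Metric.sphere (0 : Euc n) 1 |
          |(inner ℝ (x - y) ((v : Euc n)) : ℝ)| < r} ∂μ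
        ≤ ∫⁻ _ in Metric.ball x r, 1 ∂μ := by
          apply lintegral_mono
          intro y
          exact (measure_mono (Set.subset_univ _)).trans_eq homega_univ
      _ = μ (Metric.ball x r) := setLIntegral_one _
  · rw [hCbcoe]
    calc ∫⁻ y in (Metric.ball x r)ᶜ, sphOmega n {v : Metric.sphere (0 : Euc n) 1 |
          |(inner ℝ (x - y) ((v : Euc n)) : ℝ)| < r} ∂μ
        ≤ ∫⁻ y in (Metric.ball x r)ᶜ, Cb * ENNReal.ofReal (r / ‖x - y‖) ∂μ := by
          apply setLIntegral_mono' measurableSet_ball.compl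
          intro y hy
          have hxy : x - y ≠ 0 := by
            rw [sub_ne_zero]
            intro hxe
            exact hy (hxe ▸ mem_ball_self hr)
          exact omega_slab' hn (x - y) hxy r
      _ = Cb * ∫⁻ y in (Metric.ball x r)ᶜ, ENNReal.ofReal (r / ‖x - y‖) ∂μ :=
          lintegral_const_mul' _ _ hCbfin
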